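/- arXiv:2602.10842 — 2 statements merged into one kernel-verified Lean document; each statement's English description precedes it below -/
import Mathlib

section
/- Let q be a prime power, let k be an algebraically closed field containing 𝔽_{q²}, and let a₁, c ∈ k with a₁ ∈ 𝔽_{q²}^× and c ≠ 0. If the two equations (c^{q²} - c^{q²+q})·a₁^{q²+q} + (c^q - 1)·a₁^{q+1} = 0 and (c^q - 1)·a₁^{q²+q} + (c - c^{q+1})·a₁^{q+1} = 0 both hold, then c = 1. -/
/-- Let `q` be a prime power, `k` an algebraically closed field containing a copy `F`
of `𝔽_{q²}` (a subfield with `q²` elements), and `a₁, c ∈ k` with `a₁ ∈ F \ {0}` and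
`c ≠ 0`.  If `(c^{q²} - c^{q²+q})·a₁^{q²+q} + (c^q - 1)·a₁^{q+1} = 0` and
`(c^q - 1)·a₁^{q²+q} + (c - c^{q+1})·a₁^{q+1} = 0`, then `c = 1`. -/
theorem stmt_1 (q : ℕ) (hq : IsPrimePow q) (k : Type*) [Field k] [IsAlgClosed k]
    (F : Subfield k) (hF : Nat.card F = q ^ 2)
    (a₁ c : k) (ha₁F : a₁ ∈ F) (ha₁ : a₁ ≠ 0) (hc : c ≠ 0)
    (h1 : (c ^ (q ^ 2) - c ^ (q ^ 2 + q)) * a₁ ^ (q ^ 2 + q)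
            + (c ^ q - 1) * a₁ ^ (q + 1) = 0)
    (h2 : (c ^ q - 1) * a₁ ^ (q ^ 2 + q)
            + (c - c ^ (q + 1)) * a₁ ^ (q + 1) = 0) :
    c = 1 := by
  obtain ⟨p, n, hp, hn, rfl⟩ := hq
  have hp' : Nat.Prime p := hp.nat_prime
  -- F is a finite field
  have hfin : Finite F := Nat.finite_of_card_ne_zero (by
    rw [hF]; exact (pow_pos (pow_pos hp'.pos n) 2).ne')
  have : Fintype F := Fintype.ofFinite F
  have hcard : Fintype.card F = (p ^ n) ^ 2 := by
    rw [← Nat.card_eq_fintype_card, hF]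
  -- characteristic of F is p
  obtain ⟨m, hr, hFcard⟩ := (have := ringChar.charP F; FiniteField.card F (ringChar F))
  have hrp : ringChar F = p := by
    have hdvd : p ∣ ringChar F ^ (m : ℕ) := by
      rw [← hFcard, hcard]
      exact dvd_pow (dvd_pow_self p hn.ne') (by positivity)
    have := (Nat.Prime.dvd_of_dvd_pow hp' hdvd)
    exact ((Nat.prime_dvd_prime_iff_eq hp' hr).mp this).symm
  have hFchar : CharP F p := hrp ▸ ringChar.charP F
  have hkchar : CharP k p := charP_of_injective_ringHom F.subtype.injective p
  have : Fact p.Prime := ⟨hp'⟩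
  -- a₁ ^ (q^2) = a₁
  have hpow : a₁ ^ (p ^ n) ^ 2 = a₁ := by
    have := FiniteField.pow_card (⟨a₁, ha₁F⟩ : F)
    rw [hcard] at this
    exact_mod_cast congrArg (Subfield.subtype F) this
  -- hence a₁ ^ (q² + q) = a₁ ^ (q+1)
  have hkey : a₁ ^ ((p ^ n) ^ 2 + p ^ n) = a₁ ^ (p ^ n + 1) := by
    rw [pow_add, hpow, pow_add, pow_one, mul_comm]
  rw [hkey] at h2
  have hne : a₁ ^ (p ^ n + 1) ≠ 0 := pow_ne_zero _ ha₁
  have h2' : (c ^ p ^ n - 1) * (1 - c) = 0 := by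
    have : ((c ^ p ^ n - 1) + (c - c ^ (p ^ n + 1))) * a₁ ^ (p ^ n + 1) = 0 := by
      rw [add_mul]; linear_combination h2
    have h := (mul_eq_zero.mp this).resolve_right hne
    calc (c ^ p ^ n - 1) * (1 - c)
        = (c ^ p ^ n - 1) + (c - c ^ (p ^ n + 1)) := by ring
      _ = 0 := h
  rcases mul_eq_zero.mp h2' with h | h
  · -- c ^ q = 1, Frobenius gives c = 1
    have : (c - 1) ^ p ^ n = 0 := by
      rw [sub_pow_char_pow, one_pow, sub_eq_zero]
      linear_combination h
    have := pow_eq_zero_iff (n := p ^ n) (pow_pos hp'.pos n).ne' |>.mp this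
    exact sub_eq_zero.mp this
  · have := sub_eq_zero.mp h
    exact this.symm
end

section
/- Let q be a prime power and let k ⊇ 𝔽_{q²} be a field. Suppose a₁, b₁, a₂, b₂ ∈ k satisfy the two equations -(a₁^q b₂)^{q+1} + a₁^{q²} b₁^q a₂^q b₂ + a₁^q b₁^{q²} a₂ b₂^q - (b₁^q a₂)^{q+1} = 0 and -(b₁ a₂^q)^{q+1} + a₁^q b₁ a₂^{q²} b₂^q + a₁ b₁^q a₂^q b₂^{q²} - (a₁ b₂^q)^{q+1} = 0, with (a₁,b₁) ≠ (0,0) and (a₂,b₂) ≠ (0,0). Then a₁ = 0 if and only if a₂ = 0, and b₁ = 0 if and only if b₂ = 0. -/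
/-- Let `q` be a prime power and `k` a field containing a copy `F` of `𝔽_{q²}`.
If `a₁, b₁, a₂, b₂ ∈ k` satisfy the two displayed equations, with
`(a₁,b₁) ≠ (0,0)` and `(a₂,b₂) ≠ (0,0)`, then `a₁ = 0 ↔ a₂ = 0` and
`b₁ = 0 ↔ b₂ = 0`. -/
theorem stmt_2 (q : ℕ) (hq : IsPrimePow q) (k : Type*) [Field k]
    (F : Subfield k) (hF : Nat.card F = q ^ 2)
    (a₁ b₁ a₂ b₂ : k)
    (h1 : -(a₁ ^ q * b₂) ^ (q + 1) + a₁ ^ (q ^ 2) * b₁ ^ q * a₂ ^ q * b₂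
            + a₁ ^ q * b₁ ^ (q ^ 2) * a₂ * b₂ ^ q - (b₁ ^ q * a₂) ^ (q + 1) = 0)
    (h2 : -(b₁ * a₂ ^ q) ^ (q + 1) + a₁ ^ q * b₁ * a₂ ^ (q ^ 2) * b₂ ^ q
            + a₁ * b₁ ^ q * a₂ ^ q * b₂ ^ (q ^ 2) - (a₁ * b₂ ^ q) ^ (q + 1) = 0)
    (hp1 : ¬(a₁ = 0 ∧ b₁ = 0)) (hp2 : ¬(a₂ = 0 ∧ b₂ = 0)) :
    (a₁ = 0 ↔ a₂ = 0) ∧ (b₁ = 0 ↔ b₂ = 0) := by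
  have hq0 : q ≠ 0 := hq.pos.ne'
  have hq1 : q + 1 ≠ 0 := by omega
  have hq2 : q ^ 2 ≠ 0 := pow_ne_zero _ hq0
  constructor
  · constructor
    · intro ha1
      have hb1 : b₁ ≠ 0 := fun h => hp1 ⟨ha1, h⟩
      rw [ha1] at h1
      simp [zero_pow hq0, zero_pow hq1, zero_pow hq2, mul_pow, pow_eq_zero_iff,
        hb1] at h1
      exact h1
    · intro ha2
      have hb2 : b₂ ≠ 0 := fun h => hp2 ⟨ha2, h⟩
      rw [ha2] at h2
      simp [zero_pow hq0, zero_pow hq1, zero_pow hq2, mul_pow, pow_eq_zero_iff,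
        hb2] at h2
      exact h2
  · constructor
    · intro hb1
      have ha1 : a₁ ≠ 0 := fun h => hp1 ⟨h, hb1⟩
      rw [hb1] at h2
      simp [zero_pow hq0, zero_pow hq1, zero_pow hq2, mul_pow, pow_eq_zero_iff,
        ha1] at h2
      exact h2.1
    · intro hb2
      have ha2 : a₂ ≠ 0 := fun h => hp2 ⟨h, hb2⟩
      rw [hb2] at h1
      simp [zero_pow hq0, zero_pow hq1, zero_pow hq2, mul_pow, pow_eq_zero_iff,
        ha2] at h1
      exact h1.1
end
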